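/- arXiv:2312.15725 — 7 statements merged into one kernel-verified Lean document; each statement's English description precedes it below -/
import Mathlib

section
/- Let Σ be a symmetric positive definite real (n₁+n₂)×(n₁+n₂) matrix with blocks Σ_v (n₁×n₁), Σ_u (n₂×n₂), Σ_vu (n₁×n₂) and Σ_uv = Σ_vuᵀ, and let A ∈ ℝ^{n₁×m}, B ∈ ℝ^{n₂×m}. Let C be the stacked matrix [A; B] and F = (Σ_u − Σ_uv Σ_v⁻¹ Σ_vu)⁻¹ the inverse Schur complement of Σ_v in Σ. Then Cᵀ Σ⁻¹ C = Aᵀ Σ_v⁻¹ A + (Aᵀ Σ_v⁻¹ Σ_vu − Bᵀ) F (Aᵀ Σ_v⁻¹ Σ_vu − Bᵀ)ᵀ. -/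
open Matrix

/-- Joint SNR matrix with correlated noises, first form: with `C = [A; B]`,
`Σ = [[Σ_v, Σ_vu],[Σ_vuᵀ, Σ_u]]` positive definite, and
`F = (Σ_u − Σ_uv Σ_v⁻¹ Σ_vu)⁻¹` the inverse Schur complement of `Σ_v`,
`CᵀΣ⁻¹C = AᵀΣ_v⁻¹A + (AᵀΣ_v⁻¹Σ_vu − Bᵀ) F (AᵀΣ_v⁻¹Σ_vu − Bᵀ)ᵀ`. -/
theorem joint_snr_schur_form_x {n₁ n₂ m : ℕ}
    (Sv : Matrix (Fin n₁) (Fin n₁) ℝ) (Su : Matrix (Fin n₂) (Fin n₂) ℝ)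
    (Svu : Matrix (Fin n₁) (Fin n₂) ℝ)
    (hS : (Matrix.fromBlocks Sv Svu Svuᵀ Su).PosDef)
    (A : Matrix (Fin n₁) (Fin m) ℝ) (B : Matrix (Fin n₂) (Fin m) ℝ) :
    (Matrix.fromRows A B)ᵀ * (Matrix.fromBlocks Sv Svu Svuᵀ Su)⁻¹ * Matrix.fromRows A B
      = Aᵀ * Sv⁻¹ * A +
        (Aᵀ * Sv⁻¹ * Svu - Bᵀ) * (Su - Svuᵀ * Sv⁻¹ * Svu)⁻¹ * (Aᵀ * Sv⁻¹ * Svu - Bᵀ)ᵀ := by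
  -- `Sv` is positive definite
  have hSv : Sv.PosDef := by
    refine Matrix.posDef_iff_dotProduct_mulVec.mpr ⟨?_, fun x hx => ?_⟩
    · have h := hS.1
      rw [Matrix.isHermitian_fromBlocks_iff] at h
      exact h.1
    · have hx' : (Sum.elim x 0 : Fin n₁ ⊕ Fin n₂ → ℝ) ≠ 0 := by
        intro h
        apply hx
        funext i
        have := congrFun h (Sum.inl i)
        simpa using this
      have := (Matrix.posDef_iff_dotProduct_mulVec.mp hS).2 hx'
      simpa [Matrix.fromBlocks_mulVec, dotProduct] using this
  letI : Invertible Sv := hSv.isUnit.invertible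
  letI : Invertible (Matrix.fromBlocks Sv Svu Svuᵀ Su) := hS.isUnit.invertible
  letI : Invertible (Su - Svuᵀ * ⅟Sv * Svu) :=
    Matrix.invertibleOfFromBlocks₁₁Invertible Sv Svu Svuᵀ Su
  have hSvinv : ⅟Sv = Sv⁻¹ := invOf_eq_nonsing_inv Sv
  have hSchur : Invertible (Su - Svuᵀ * Sv⁻¹ * Svu) := by
    rw [← hSvinv]; infer_instance
  letI := hSchur
  set S := Su - Svuᵀ * Sv⁻¹ * Svu with hSdef
  have hinv : (Matrix.fromBlocks Sv Svu Svuᵀ Su)⁻¹ =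
      Matrix.fromBlocks (Sv⁻¹ + Sv⁻¹ * Svu * S⁻¹ * Svuᵀ * Sv⁻¹) (-(Sv⁻¹ * Svu * S⁻¹))
        (-(S⁻¹ * Svuᵀ * Sv⁻¹)) S⁻¹ := by
    rw [← invOf_eq_nonsing_inv, Matrix.invOf_fromBlocks₁₁_eq]
    simp only [invOf_eq_nonsing_inv, hSdef]
  have hSvT : (Sv⁻¹)ᵀ = Sv⁻¹ := by
    rw [Matrix.transpose_nonsing_inv]
    congr 1
    have h := hS.1
    rw [Matrix.isHermitian_fromBlocks_iff] at h
    simpa [Matrix.IsHermitian] using h.1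
  rw [hinv, Matrix.transpose_fromRows, Matrix.fromCols_mul_fromBlocks,
    Matrix.fromCols_mul_fromRows]
  simp only [Matrix.transpose_sub, Matrix.transpose_mul, Matrix.transpose_transpose, hSvT]
  simp only [Matrix.mul_add, Matrix.add_mul, Matrix.mul_sub, Matrix.sub_mul,
    Matrix.mul_neg, Matrix.neg_mul, Matrix.mul_assoc]
  abel
end

section
/- Let Σ be a symmetric positive definite real (n₁+n₂)×(n₁+n₂) matrix with blocks Σ_v (n₁×n₁), Σ_u (n₂×n₂), Σ_vu (n₁×n₂) and Σ_uv = Σ_vuᵀ, and let A ∈ ℝ^{n₁×m}, B ∈ ℝ^{n₂×m}. Let C be the stacked matrix [A; B] and G = (Σ_v − Σ_vu Σ_u⁻¹ Σ_uv)⁻¹ the inverse Schur complement of Σ_u in Σ. Then Cᵀ Σ⁻¹ C = Bᵀ Σ_u⁻¹ B + (Bᵀ Σ_u⁻¹ Σ_uv − Aᵀ) G (Bᵀ Σ_u⁻¹ Σ_uv − Aᵀ)ᵀ. -/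
open Matrix

/-- Joint SNR matrix with correlated noises, second form: with `C = [A; B]`,
`Σ = [[Σ_v, Σ_vu],[Σ_vuᵀ, Σ_u]]` positive definite, and
`G = (Σ_v − Σ_vu Σ_u⁻¹ Σ_uv)⁻¹` the inverse Schur complement of `Σ_u`,
`CᵀΣ⁻¹C = BᵀΣ_u⁻¹B + (BᵀΣ_u⁻¹Σ_uv − Aᵀ) G (BᵀΣ_u⁻¹Σ_uv − Aᵀ)ᵀ`. -/
theorem joint_snr_schur_form_y {n₁ n₂ m : ℕ}
    (Sv : Matrix (Fin n₁) (Fin n₁) ℝ) (Su : Matrix (Fin n₂) (Fin n₂) ℝ)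
    (Svu : Matrix (Fin n₁) (Fin n₂) ℝ)
    (hS : (Matrix.fromBlocks Sv Svu Svuᵀ Su).PosDef)
    (A : Matrix (Fin n₁) (Fin m) ℝ) (B : Matrix (Fin n₂) (Fin m) ℝ) :
    (Matrix.fromRows A B)ᵀ * (Matrix.fromBlocks Sv Svu Svuᵀ Su)⁻¹ * Matrix.fromRows A B
      = Bᵀ * Su⁻¹ * B +
        (Bᵀ * Su⁻¹ * Svuᵀ - Aᵀ) * (Sv - Svu * Su⁻¹ * Svuᵀ)⁻¹ * (Bᵀ * Su⁻¹ * Svuᵀ - Aᵀ)ᵀ := by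
  have hH := hS.1
  rw [isHermitian_fromBlocks_iff] at hH
  obtain ⟨hSv, _, _, hSuH⟩ := hH
  -- Su is positive definite
  have hSu : Su.PosDef := by
    refine PosDef.of_dotProduct_mulVec_pos hSuH fun x hx => ?_
    have hx' : (Sum.elim (0 : Fin n₁ → ℝ) x) ≠ 0 := by
      intro h
      apply hx
      funext i
      exact congrFun h (Sum.inr i)
    have := hS.dotProduct_mulVec_pos hx'
    simpa [Function.star_sumElim, fromBlocks_mulVec, sumElim_dotProduct_sumElim] using this
  letI := hS.isUnit.invertible
  letI := hSu.isUnit.invertible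
  letI := invertibleOfFromBlocks₂₂Invertible Sv Svu Svuᵀ Su
  have hinv : Invertible (Sv - Svu * Su⁻¹ * Svuᵀ) := by
    rwa [← invOf_eq_nonsing_inv]
  letI := hinv
  -- symmetry of the Schur complement
  have hsc : (Sv - Svu * Su⁻¹ * Svuᵀ)ᵀ = Sv - Svu * Su⁻¹ * Svuᵀ := by
    have h1 : Suᵀ = Su := hSuH
    have h2 : Svᵀ = Sv := hSv
    simp [transpose_sub, transpose_mul, transpose_nonsing_inv, h1, h2, Matrix.mul_assoc]
  have hGsym : (Sv - Svu * Su⁻¹ * Svuᵀ)⁻¹ᵀ = (Sv - Svu * Su⁻¹ * Svuᵀ)⁻¹ := by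
    rw [transpose_nonsing_inv, hsc]
  have hSuInvSym : Su⁻¹ᵀ = Su⁻¹ := by
    rw [transpose_nonsing_inv, show Suᵀ = Su from hSuH]
  -- block inverse formula
  have hblock : (Matrix.fromBlocks Sv Svu Svuᵀ Su)⁻¹ =
      Matrix.fromBlocks ((Sv - Svu * Su⁻¹ * Svuᵀ)⁻¹)
        (-((Sv - Svu * Su⁻¹ * Svuᵀ)⁻¹ * Svu * Su⁻¹))
        (-(Su⁻¹ * Svuᵀ * (Sv - Svu * Su⁻¹ * Svuᵀ)⁻¹))
        (Su⁻¹ + Su⁻¹ * Svuᵀ * (Sv - Svu * Su⁻¹ * Svuᵀ)⁻¹ * Svu * Su⁻¹) := by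
    rw [← invOf_eq_nonsing_inv, invOf_fromBlocks₂₂_eq]
    simp only [invOf_eq_nonsing_inv]
  set G := (Sv - Svu * Su⁻¹ * Svuᵀ)⁻¹ with hG
  rw [hblock, transpose_fromRows, fromCols_mul_fromBlocks, fromCols_mul_fromRows]
  have hT : (Bᵀ * Su⁻¹ * Svuᵀ - Aᵀ)ᵀ = Svu * Su⁻¹ * B - A := by
    simp [transpose_sub, transpose_mul, hSuInvSym, Matrix.mul_assoc]
  rw [hT]
  simp only [Matrix.mul_sub, Matrix.sub_mul, Matrix.mul_add, Matrix.add_mul,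
    Matrix.mul_neg, Matrix.neg_mul, Matrix.mul_assoc]
  abel
end

section
/- Let Σ be a symmetric positive definite real (n₁+n₂)×(n₁+n₂) matrix with blocks Σ_v, Σ_u, Σ_vu, Σ_uv = Σ_vuᵀ, let A ∈ ℝ^{n₁×m}, B ∈ ℝ^{n₂×m}, and let C = [A; B] be the stacked matrix. Then the synergic information matrices S^x = CᵀΣ⁻¹C − AᵀΣ_v⁻¹A and S^y = CᵀΣ⁻¹C − BᵀΣ_u⁻¹B are both positive semidefinite. In particular, the Fisher information of the joint measurements dominates (in the Loewner order) each individual Fisher information, so fusing the two modalities never increases the Cramér–Rao lower bound. -/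
open Matrix

variable {n₁ n₂ : ℕ}


private lemma block_posDef₁ {Sv : Matrix (Fin n₁) (Fin n₁) ℝ} {Su : Matrix (Fin n₂) (Fin n₂) ℝ}
    {Svu : Matrix (Fin n₁) (Fin n₂) ℝ}
    (hS : (Matrix.fromBlocks Sv Svu Svuᵀ Su).PosDef) : Sv.PosDef := by
  rw [posDef_iff_dotProduct_mulVec] at hS ⊢
  constructor
  · have h := hS.1
    rw [IsHermitian, fromBlocks_conjTranspose] at h
    have := congrArg Matrix.toBlocks₁₁ h
    simpa [toBlocks_fromBlocks₁₁, Matrix.IsSymm] using this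
  · intro x hx
    have hx' : (Sum.elim x 0 : Fin n₁ ⊕ Fin n₂ → ℝ) ≠ 0 := by
      intro h
      exact hx (funext fun i => congrFun h (Sum.inl i))
    have := hS.2 hx'
    simpa [fromBlocks_mulVec, dotProduct] using this

private lemma key₁ {Sv : Matrix (Fin n₁) (Fin n₁) ℝ} {Su : Matrix (Fin n₂) (Fin n₂) ℝ}
    {Svu : Matrix (Fin n₁) (Fin n₂) ℝ}
    (hS : (Matrix.fromBlocks Sv Svu Svuᵀ Su).PosDef) :
    ((Matrix.fromBlocks Sv Svu Svuᵀ Su)⁻¹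
      - Matrix.fromBlocks Sv⁻¹ 0 0 0).PosSemidef := by
  set Sg := Matrix.fromBlocks Sv Svu Svuᵀ Su with hSg
  have hSv : Sv.PosDef := block_posDef₁ hS
  haveI := hSv.isUnit.invertible
  haveI := hS.inv.isUnit.invertible
  set Q : Matrix (Fin n₁ ⊕ Fin n₂) (Fin n₁) ℝ := Matrix.fromRows 1 0 with hQ
  have hM : (Matrix.fromBlocks Sv Qᵀ (Qᵀ)ᴴ Sg⁻¹).PosSemidef := by
    rw [PosDef.fromBlocks₂₂ _ _ hS.inv, nonsing_inv_nonsing_inv _ hS.det_pos.ne'.isUnit]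
    have hQS : Qᵀ * Sg * (Qᵀ)ᴴ = Sv := by
      rw [conjTranspose_eq_transpose_of_trivial, transpose_transpose, hQ, transpose_fromRows,
        hSg, fromCols_mul_fromBlocks]
      simp [fromCols_mul_fromRows]
    rw [Matrix.mul_assoc, ← Matrix.mul_assoc, hQS]
    simp [Matrix.PosSemidef.zero]
  rw [PosDef.fromBlocks₁₁ _ _ hSv] at hM
  have hQQ : (Qᵀ)ᴴ * Sv⁻¹ * Qᵀ = Matrix.fromBlocks Sv⁻¹ 0 0 0 := by
    rw [conjTranspose_eq_transpose_of_trivial, transpose_transpose, hQ, transpose_fromRows,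
      fromRows_mul, fromRows_mul_fromCols]
    simp
  rwa [hQQ] at hM

private lemma block_posDef₂ {Sv : Matrix (Fin n₁) (Fin n₁) ℝ} {Su : Matrix (Fin n₂) (Fin n₂) ℝ}
    {Svu : Matrix (Fin n₁) (Fin n₂) ℝ}
    (hS : (Matrix.fromBlocks Sv Svu Svuᵀ Su).PosDef) : Su.PosDef := by
  rw [posDef_iff_dotProduct_mulVec] at hS ⊢
  constructor
  · have h := hS.1
    rw [IsHermitian, fromBlocks_conjTranspose] at h
    have := congrArg Matrix.toBlocks₂₂ h
    simpa [toBlocks_fromBlocks₂₂, Matrix.IsSymm] using this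
  · intro x hx
    have hx' : (Sum.elim 0 x : Fin n₁ ⊕ Fin n₂ → ℝ) ≠ 0 := by
      intro h
      exact hx (funext fun i => congrFun h (Sum.inr i))
    have := hS.2 hx'
    simpa [fromBlocks_mulVec, dotProduct] using this

private lemma key₂ {Sv : Matrix (Fin n₁) (Fin n₁) ℝ} {Su : Matrix (Fin n₂) (Fin n₂) ℝ}
    {Svu : Matrix (Fin n₁) (Fin n₂) ℝ}
    (hS : (Matrix.fromBlocks Sv Svu Svuᵀ Su).PosDef) :
    ((Matrix.fromBlocks Sv Svu Svuᵀ Su)⁻¹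
      - Matrix.fromBlocks 0 0 0 Su⁻¹).PosSemidef := by
  set Sg := Matrix.fromBlocks Sv Svu Svuᵀ Su with hSg
  have hSu : Su.PosDef := block_posDef₂ hS
  haveI := hSu.isUnit.invertible
  haveI := hS.inv.isUnit.invertible
  set Q : Matrix (Fin n₁ ⊕ Fin n₂) (Fin n₂) ℝ := Matrix.fromRows 0 1 with hQ
  have hM : (Matrix.fromBlocks Su Qᵀ (Qᵀ)ᴴ Sg⁻¹).PosSemidef := by
    rw [PosDef.fromBlocks₂₂ _ _ hS.inv, nonsing_inv_nonsing_inv _ hS.det_pos.ne'.isUnit]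
    have hQS : Qᵀ * Sg * (Qᵀ)ᴴ = Su := by
      rw [conjTranspose_eq_transpose_of_trivial, transpose_transpose, hQ, transpose_fromRows,
        hSg, fromCols_mul_fromBlocks]
      simp [fromCols_mul_fromRows]
    rw [Matrix.mul_assoc, ← Matrix.mul_assoc, hQS]
    simp [Matrix.PosSemidef.zero]
  rw [PosDef.fromBlocks₁₁ _ _ hSu] at hM
  have hQQ : (Qᵀ)ᴴ * Su⁻¹ * Qᵀ = Matrix.fromBlocks 0 0 0 Su⁻¹ := by
    rw [conjTranspose_eq_transpose_of_trivial, transpose_transpose, hQ, transpose_fromRows,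
      fromRows_mul, fromRows_mul_fromCols]
    simp
  rwa [hQQ] at hM

/-- The synergic information matrices `S^x = CᵀΣ⁻¹C − AᵀΣ_v⁻¹A` and
`S^y = CᵀΣ⁻¹C − BᵀΣ_u⁻¹B` are positive semidefinite: the Fisher information of the joint
measurements dominates each individual Fisher information in the Loewner order. -/
theorem synergic_information_posSemidef {n₁ n₂ m : ℕ}
    (Sv : Matrix (Fin n₁) (Fin n₁) ℝ) (Su : Matrix (Fin n₂) (Fin n₂) ℝ)
    (Svu : Matrix (Fin n₁) (Fin n₂) ℝ)
    (hS : (Matrix.fromBlocks Sv Svu Svuᵀ Su).PosDef)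
    (A : Matrix (Fin n₁) (Fin m) ℝ) (B : Matrix (Fin n₂) (Fin m) ℝ) :
    ((Matrix.fromRows A B)ᵀ * (Matrix.fromBlocks Sv Svu Svuᵀ Su)⁻¹ * Matrix.fromRows A B
        - Aᵀ * Sv⁻¹ * A).PosSemidef ∧
    ((Matrix.fromRows A B)ᵀ * (Matrix.fromBlocks Sv Svu Svuᵀ Su)⁻¹ * Matrix.fromRows A B
        - Bᵀ * Su⁻¹ * B).PosSemidef := by
  set C := Matrix.fromRows A B with hC
  constructor
  · have h := (key₁ hS).conjTranspose_mul_mul_same C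
    rw [conjTranspose_eq_transpose_of_trivial] at h
    have e : Matrix.transpose C * (Matrix.fromBlocks Sv⁻¹ 0 0 0 : Matrix (Fin n₁ ⊕ Fin n₂) (Fin n₁ ⊕ Fin n₂) ℝ) * C = Aᵀ * Sv⁻¹ * A := by
      rw [hC, transpose_fromRows, fromCols_mul_fromBlocks]
      simp [fromCols_mul_fromRows, Matrix.mul_assoc]
    rwa [Matrix.mul_sub, Matrix.sub_mul, e] at h
  · have h := (key₂ hS).conjTranspose_mul_mul_same C
    rw [conjTranspose_eq_transpose_of_trivial] at h
    have e : Matrix.transpose C * (Matrix.fromBlocks 0 0 0 Su⁻¹ : Matrix (Fin n₁ ⊕ Fin n₂) (Fin n₁ ⊕ Fin n₂) ℝ) * C = Bᵀ * Su⁻¹ * B := by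
      rw [hC, transpose_fromRows, fromCols_mul_fromBlocks]
      simp [fromCols_mul_fromRows, Matrix.mul_assoc]
    rwa [Matrix.mul_sub, Matrix.sub_mul, e] at h
end

section
/- Let Ã ∈ ℝ^{n₁×m} and ρ ∈ ℝ^{n₁×n₂} with I − ρᵀρ positive definite, let B̃ = ρᵀÃ, and let Σ = [[I, ρ],[ρᵀ, I]] be the joint noise covariance (assumed positive definite). Then the joint SNR matrix of the stacked model C = [Ã; B̃] satisfies CᵀΣ⁻¹C = ÃᵀÃ; that is, the second modality is redundant: adding ỹ to x̃ yields exactly the same Fisher information as x̃ alone. -/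
open Matrix

/-- Modality redundancy: if `B̃ = ρᵀÃ`, then the joint SNR matrix of the stacked model
`C = [Ã; B̃]` with noise covariance `Σ = [[I, ρ],[ρᵀ, I]]` equals `ÃᵀÃ`: the second
modality adds no Fisher information. -/
theorem second_modality_redundant {n₁ n₂ m : ℕ}
    (A : Matrix (Fin n₁) (Fin m) ℝ) (ρ : Matrix (Fin n₁) (Fin n₂) ℝ)
    (hρ : ((1 : Matrix (Fin n₂) (Fin n₂) ℝ) - ρᵀ * ρ).PosDef)
    (hS : (Matrix.fromBlocks (1 : Matrix (Fin n₁) (Fin n₁) ℝ) ρ ρᵀ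
      (1 : Matrix (Fin n₂) (Fin n₂) ℝ)).PosDef)
    (B : Matrix (Fin n₂) (Fin m) ℝ) (hB : B = ρᵀ * A) :
    (Matrix.fromRows A B)ᵀ *
        (Matrix.fromBlocks (1 : Matrix (Fin n₁) (Fin n₁) ℝ) ρ ρᵀ
          (1 : Matrix (Fin n₂) (Fin n₂) ℝ))⁻¹ * Matrix.fromRows A B
      = Aᵀ * A := by
  set S := Matrix.fromBlocks (1 : Matrix (Fin n₁) (Fin n₁) ℝ) ρ ρᵀ
      (1 : Matrix (Fin n₂) (Fin n₂) ℝ) with hSdef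
  have key : S * Matrix.fromRows A (0 : Matrix (Fin n₂) (Fin m) ℝ) = Matrix.fromRows A B := by
    rw [hSdef, Matrix.fromBlocks_mul_fromRows]
    simp [hB]
  have hdet : IsUnit S.det := hS.det_pos.ne'.isUnit
  have inv : S⁻¹ * Matrix.fromRows A B = Matrix.fromRows A 0 := by
    rw [← key, Matrix.nonsing_inv_mul_cancel_left _ _ hdet]
  rw [Matrix.mul_assoc, inv, Matrix.transpose_fromRows, Matrix.fromCols_mul_fromRows]
  simp
end

section
/- Let B̃ ∈ ℝ^{n₂×m} and ρ ∈ ℝ^{n₁×n₂} with I − ρρᵀ positive definite, let Ã = ρB̃, and let Σ = [[I, ρ],[ρᵀ, I]] be the joint noise covariance (assumed positive definite). Then the joint SNR matrix of the stacked model C = [Ã; B̃] satisfies CᵀΣ⁻¹C = B̃ᵀB̃; that is, the first modality is redundant: adding x̃ to ỹ yields exactly the same Fisher information as ỹ alone. -/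
open Matrix

/-- Modality redundancy: if `Ã = ρB̃`, then the joint SNR matrix of the stacked model
`C = [Ã; B̃]` with noise covariance `Σ = [[I, ρ],[ρᵀ, I]]` equals `B̃ᵀB̃`: the first
modality adds no Fisher information. -/
theorem first_modality_redundant {n₁ n₂ m : ℕ}
    (B : Matrix (Fin n₂) (Fin m) ℝ) (ρ : Matrix (Fin n₁) (Fin n₂) ℝ)
    (hρ : ((1 : Matrix (Fin n₁) (Fin n₁) ℝ) - ρ * ρᵀ).PosDef)
    (hS : (Matrix.fromBlocks (1 : Matrix (Fin n₁) (Fin n₁) ℝ) ρ ρᵀ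
      (1 : Matrix (Fin n₂) (Fin n₂) ℝ)).PosDef)
    (A : Matrix (Fin n₁) (Fin m) ℝ) (hA : A = ρ * B) :
    (Matrix.fromRows A B)ᵀ *
        (Matrix.fromBlocks (1 : Matrix (Fin n₁) (Fin n₁) ℝ) ρ ρᵀ
          (1 : Matrix (Fin n₂) (Fin n₂) ℝ))⁻¹ * Matrix.fromRows A B
      = Bᵀ * B := by
  set S := Matrix.fromBlocks (1 : Matrix (Fin n₁) (Fin n₁) ℝ) ρ ρᵀ
      (1 : Matrix (Fin n₂) (Fin n₂) ℝ) with hSdef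
  have hSinv : IsUnit S.det := isUnit_iff_ne_zero.mpr (ne_of_gt hS.det_pos)
  have hkey : S * Matrix.fromRows (0 : Matrix (Fin n₁) (Fin m) ℝ) B = Matrix.fromRows A B := by
    rw [hSdef, fromBlocks_mul_fromRows]
    simp [hA]
  have h2 : S⁻¹ * Matrix.fromRows A B = Matrix.fromRows (0 : Matrix (Fin n₁) (Fin m) ℝ) B := by
    rw [← hkey, ← Matrix.mul_assoc, Matrix.nonsing_inv_mul _ hSinv, Matrix.one_mul]
  rw [Matrix.mul_assoc, h2, transpose_fromRows, fromCols_mul_fromRows]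
  simp
end

section
/- Let Ã ∈ ℝ^{n₁×m}, ρ ∈ ℝ^{n₁×n₂} with I − ρᵀρ positive definite, and λ ≥ 0 such that I − λ(I − ρᵀρ) is invertible. Define f : ℝ^{n₂×m} → ℝ by f(B̃) = Tr((Ãᵀρ − B̃ᵀ)(I − ρᵀρ)⁻¹(Ãᵀρ − B̃ᵀ)ᵀ) − λ Tr(B̃ᵀB̃). Then the Fréchet derivative of f vanishes at B̃* = (I − λ(I − ρᵀρ))⁻¹ ρᵀ Ã; that is, B̃* is a critical point of the Lagrangian for maximizing the trace of the joint Fisher information subject to the secondary SNR budget Tr(B̃ᵀB̃) ≤ p. -/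
open Matrix

attribute [local instance] Matrix.normedAddCommGroup Matrix.normedSpace

noncomputable def bilAux {n₂ m : ℕ} (T : Matrix (Fin n₂) (Fin n₂) ℝ) :
    Matrix (Fin n₂) (Fin m) ℝ →ₗ[ℝ] Matrix (Fin n₂) (Fin m) ℝ →ₗ[ℝ] ℝ :=
  LinearMap.mk₂ ℝ (fun X Y => (Xᵀ * T * Y).trace)
    (by intro X X' Y; simp [Matrix.transpose_add, Matrix.add_mul, Matrix.trace_add])
    (by intro c X Y; simp [Matrix.transpose_smul, Matrix.smul_mul, Matrix.trace_smul])
    (by intro X Y Y'; simp [Matrix.mul_add, Matrix.trace_add])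
    (by intro c X Y; simp [Matrix.mul_smul, Matrix.trace_smul])

noncomputable def bil {n₂ m : ℕ} (T : Matrix (Fin n₂) (Fin n₂) ℝ) :
    Matrix (Fin n₂) (Fin m) ℝ →L[ℝ] Matrix (Fin n₂) (Fin m) ℝ →L[ℝ] ℝ :=
  LinearMap.toContinuousLinearMap
    ((LinearMap.toContinuousLinearMap :
        (Matrix (Fin n₂) (Fin m) ℝ →ₗ[ℝ] ℝ) ≃ₗ[ℝ] _).toLinearMap.comp (bilAux T))

@[simp] lemma bil_apply {n₂ m : ℕ} (T : Matrix (Fin n₂) (Fin n₂) ℝ)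
    (X Y : Matrix (Fin n₂) (Fin m) ℝ) : bil T X Y = (Xᵀ * T * Y).trace := rfl

/-- Optimal secondary sensor configuration: the Fréchet derivative of the Lagrangian
`f(B̃) = Tr((Ãᵀρ − B̃ᵀ)(I − ρᵀρ)⁻¹(Ãᵀρ − B̃ᵀ)ᵀ) − λ Tr(B̃ᵀB̃)` vanishes at
`B̃* = (I − λ(I − ρᵀρ))⁻¹ ρᵀ Ã`. -/
theorem optimal_secondary_sensor_critical_point {n₁ n₂ m : ℕ}
    (A : Matrix (Fin n₁) (Fin m) ℝ) (ρ : Matrix (Fin n₁) (Fin n₂) ℝ)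
    (hρ : ((1 : Matrix (Fin n₂) (Fin n₂) ℝ) - ρᵀ * ρ).PosDef)
    (lam : ℝ) (hlam : 0 ≤ lam)
    (hinv : IsUnit ((1 : Matrix (Fin n₂) (Fin n₂) ℝ) -
      lam • ((1 : Matrix (Fin n₂) (Fin n₂) ℝ) - ρᵀ * ρ))) :
    fderiv ℝ
      (fun B : Matrix (Fin n₂) (Fin m) ℝ =>
        ((Aᵀ * ρ - Bᵀ) * ((1 : Matrix (Fin n₂) (Fin n₂) ℝ) - ρᵀ * ρ)⁻¹ *
            (Aᵀ * ρ - Bᵀ)ᵀ).trace - lam * (Bᵀ * B).trace)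
      (((1 : Matrix (Fin n₂) (Fin n₂) ℝ) -
          lam • ((1 : Matrix (Fin n₂) (Fin n₂) ℝ) - ρᵀ * ρ))⁻¹ * ρᵀ * A) = 0 := by
  set S : Matrix (Fin n₂) (Fin n₂) ℝ := ((1 : Matrix (Fin n₂) (Fin n₂) ℝ) - ρᵀ * ρ)⁻¹ with hSdef
  set K : Matrix (Fin n₂) (Fin n₂) ℝ :=
    (1 : Matrix (Fin n₂) (Fin n₂) ℝ) - lam • ((1 : Matrix (Fin n₂) (Fin n₂) ℝ) - ρᵀ * ρ) with hKdef
  set B₀ : Matrix (Fin n₂) (Fin m) ℝ := K⁻¹ * ρᵀ * A with hB₀def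
  have hUdet : IsUnit ((1 : Matrix (Fin n₂) (Fin n₂) ℝ) - ρᵀ * ρ).det := hρ.det_pos.ne'.isUnit
  have hS1 : S * ((1 : Matrix (Fin n₂) (Fin n₂) ℝ) - ρᵀ * ρ) = 1 :=
    Matrix.nonsing_inv_mul _ hUdet
  have hSsymm : Sᵀ = S := by
    show ((1 : Matrix (Fin n₂) (Fin n₂) ℝ) - ρᵀ * ρ)⁻¹ᵀ = _
    rw [Matrix.transpose_nonsing_inv]
    congr 1
    simp [Matrix.transpose_sub, Matrix.transpose_mul]
  have hKB : K * B₀ = ρᵀ * A := by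
    rw [hB₀def, ← Matrix.mul_assoc, ← Matrix.mul_assoc, Matrix.mul_nonsing_inv _
      ((Matrix.isUnit_iff_isUnit_det K).mp hinv), Matrix.one_mul]
  have hM : S * (ρᵀ * A - B₀) = -(lam • B₀) := by
    rw [← hKB]
    have h0 : K * B₀ - B₀ = -(lam • (((1 : Matrix (Fin n₂) (Fin n₂) ℝ) - ρᵀ * ρ) * B₀)) := by
      rw [hKdef]
      simp [Matrix.sub_mul, Matrix.smul_mul]
    rw [h0, Matrix.mul_neg, Matrix.mul_smul, ← Matrix.mul_assoc, hS1, Matrix.one_mul]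
  have key : ∀ (T : Matrix (Fin n₂) (Fin n₂) ℝ), Tᵀ = T → ∀ (X Y : Matrix (Fin n₂) (Fin m) ℝ),
      (Xᵀ * T * Y).trace = (Yᵀ * T * X).trace := by
    intro T hT X Y
    rw [← Matrix.trace_transpose (Xᵀ * T * Y)]
    simp [Matrix.transpose_mul, hT, mul_assoc]
    rw [Matrix.mul_assoc]
  -- rewrite the function
  have hfun : (fun B : Matrix (Fin n₂) (Fin m) ℝ =>
        ((Aᵀ * ρ - Bᵀ) * S * (Aᵀ * ρ - Bᵀ)ᵀ).trace - lam * (Bᵀ * B).trace)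
      = fun B : Matrix (Fin n₂) (Fin m) ℝ =>
        bil S (ρᵀ * A - B) (ρᵀ * A - B) - lam * bil 1 B B := by
    funext B
    simp [bil_apply, Matrix.transpose_sub, Matrix.transpose_mul, Matrix.mul_one,
      Matrix.transpose_transpose, Matrix.sub_mul, Matrix.mul_sub, Matrix.trace_sub]
    ring
  rw [hfun]
  have hsub : HasFDerivAt (fun B : Matrix (Fin n₂) (Fin m) ℝ => ρᵀ * A - B)
      (0 - ContinuousLinearMap.id ℝ (Matrix (Fin n₂) (Fin m) ℝ)) B₀ :=
    (hasFDerivAt_const _ _).sub (hasFDerivAt_id _)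
  have h1 := (bil S).hasFDerivAt_of_bilinear hsub hsub
  have h2 := ((bil (1 : Matrix (Fin n₂) (Fin n₂) ℝ)).hasFDerivAt_of_bilinear
    (hasFDerivAt_id B₀) (hasFDerivAt_id B₀)).const_mul lam
  have h := h1.sub h2
  refine HasFDerivAt.fderiv ?_
  refine h.congr_fderiv ?_
  symm
  refine ContinuousLinearMap.ext fun H => ?_
  change (0 : ℝ) = bil S (ρᵀ * A - B₀) ((0 - ContinuousLinearMap.id ℝ (Matrix (Fin n₂) (Fin m) ℝ)) H) + bil S ((0 - ContinuousLinearMap.id ℝ (Matrix (Fin n₂) (Fin m) ℝ)) H) (ρᵀ * A - B₀) -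
    lam • (bil (1 : Matrix (Fin n₂) (Fin n₂) ℝ) B₀ (ContinuousLinearMap.id ℝ (Matrix (Fin n₂) (Fin m) ℝ) H) + bil (1 : Matrix (Fin n₂) (Fin n₂) ℝ) (ContinuousLinearMap.id ℝ (Matrix (Fin n₂) (Fin m) ℝ) H) B₀)
  simp only [bil_apply, ContinuousLinearMap.sub_apply, ContinuousLinearMap.zero_apply, ContinuousLinearMap.coe_id', id_eq, zero_sub, smul_eq_mul]
  simp only [ContinuousLinearMap.neg_apply, ContinuousLinearMap.coe_id', id_eq,
    Matrix.transpose_neg, Matrix.mul_neg, Matrix.neg_mul, Matrix.trace_neg, Matrix.mul_one]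
  have e := key S hSsymm H (ρᵀ * A - B₀)
  have e' : (Hᵀ * S * (ρᵀ * A - B₀)).trace = -(lam * (Hᵀ * B₀).trace) := by
    rw [Matrix.mul_assoc, hM]
    simp [Matrix.mul_neg, Matrix.trace_neg, Matrix.mul_smul, Matrix.trace_smul, smul_eq_mul]
  have e1 : (B₀ᵀ * H).trace = (Hᵀ * B₀).trace := by
    rw [← Matrix.trace_transpose (B₀ᵀ * H)]
    simp [Matrix.transpose_mul]
  rw [← e, e', e1]
  ring
end

section
/- Let S₁, S₂ and P be real symmetric positive semidefinite m×m matrices. Then det(I + (S₁ + S₂)P) ≤ det(I + S₁P) · det(I + S₂P). Equivalently, in terms of the information function I_s(M) = log det(I + M P) of a Gaussian source with covariance P, I_s(S₁ + S₂) ≤ I_s(S₁) + I_s(S₂): the information obtained by jointly processing two sensor sets with uncorrelated Gaussian noises never exceeds the sum of the informations obtained from each set individually (nonnegativity of the multivariate mutual information between the source and the two sensor sets). -/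
open Matrix
open scoped MatrixOrder

section Aux

variable {m : ℕ}

/-- `det (1 + E) ≥ 1` for a positive semidefinite real matrix `E`. -/
lemma one_le_det_one_add {E : Matrix (Fin m) (Fin m) ℝ} (hE : E.PosSemidef) :
    1 ≤ ((1 : Matrix (Fin m) (Fin m) ℝ) + E).det := by
  have hH := hE.isHermitian
  set U : Matrix (Fin m) (Fin m) ℝ := (IsHermitian.eigenvectorUnitary hH : Matrix (Fin m) (Fin m) ℝ)
  have hU : U ∈ Matrix.unitaryGroup (Fin m) ℝ := (IsHermitian.eigenvectorUnitary hH).2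
  have hUU : U * star U = 1 := (Matrix.mem_unitaryGroup_iff).mp hU
  have hspec : E = U * Matrix.diagonal hH.eigenvalues * star U := by
    have := hH.spectral_theorem
    simpa [RCLike.ofReal_real_eq_id] using this
  have key : (1 : Matrix (Fin m) (Fin m) ℝ) + E
      = U * ((1 : Matrix (Fin m) (Fin m) ℝ) + Matrix.diagonal hH.eigenvalues) * star U := by
    rw [Matrix.mul_add, Matrix.add_mul, Matrix.mul_one, hUU, ← hspec]
  have hdetU : U.det * (star U).det = 1 := by
    rw [← Matrix.det_mul, hUU, Matrix.det_one]
  have hdiag : (1 : Matrix (Fin m) (Fin m) ℝ) + Matrix.diagonal hH.eigenvalues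
      = Matrix.diagonal (fun i => 1 + hH.eigenvalues i) := by
    rw [← Matrix.diagonal_one, Matrix.diagonal_add]
  have hd : 1 ≤ ((1 : Matrix (Fin m) (Fin m) ℝ) + Matrix.diagonal hH.eigenvalues).det := by
    rw [hdiag, Matrix.det_diagonal]
    calc (1 : ℝ) = ∏ _i : Fin m, (1 : ℝ) := by simp
      _ ≤ ∏ i : Fin m, (1 + hH.eigenvalues i) := by
          refine Finset.prod_le_prod (fun i _ => by norm_num) (fun i _ => ?_)
          have := hE.eigenvalues_nonneg i
          linarith
  rw [key, Matrix.det_mul, Matrix.det_mul]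
  have hre : U.det * ((1 : Matrix (Fin m) (Fin m) ℝ) + Matrix.diagonal hH.eigenvalues).det
        * (star U).det
      = ((1 : Matrix (Fin m) (Fin m) ℝ) + Matrix.diagonal hH.eigenvalues).det
        * (U.det * (star U).det) := by ring
  rw [hre, hdetU, mul_one]
  exact hd

/-- Determinant monotonicity: `det N ≤ det (N + D)` for `N` positive definite and
`D` positive semidefinite. -/
lemma det_le_det_add {N D : Matrix (Fin m) (Fin m) ℝ} (hN : N.PosDef) (hD : D.PosSemidef) :
    N.det ≤ (N + D).det := by
  have hNinv : (N⁻¹).PosSemidef := hN.inv.posSemidef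
  have hNunit : IsUnit N.det := isUnit_iff_ne_zero.mpr (ne_of_gt hN.det_pos)
  set R := CFC.sqrt D with hRdef
  have hR : R * R = D := CFC.sqrt_mul_sqrt_self D hD.nonneg
  have hRherm : R.IsHermitian := (CFC.sqrt_nonneg D).posSemidef.isHermitian
  have hfactor : N + D = N * ((1 : Matrix (Fin m) (Fin m) ℝ) + N⁻¹ * D) := by
    rw [Matrix.mul_add, Matrix.mul_one, ← Matrix.mul_assoc, Matrix.mul_nonsing_inv _ hNunit,
      Matrix.one_mul]
  have hcomm : ((1 : Matrix (Fin m) (Fin m) ℝ) + N⁻¹ * D).det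
      = ((1 : Matrix (Fin m) (Fin m) ℝ) + R * (N⁻¹ * R)).det := by
    have h := Matrix.det_one_add_mul_comm (N⁻¹ * R) R
    rwa [Matrix.mul_assoc, hR] at h
  have hpsd : (R * (N⁻¹ * R)).PosSemidef := by
    have := hNinv.conjTranspose_mul_mul_same R
    rwa [hRherm.eq, Matrix.mul_assoc] at this
  have h1 : 1 ≤ ((1 : Matrix (Fin m) (Fin m) ℝ) + R * (N⁻¹ * R)).det :=
    one_le_det_one_add hpsd
  calc N.det = N.det * 1 := (mul_one _).symm
    _ ≤ N.det * ((1 : Matrix (Fin m) (Fin m) ℝ) + R * (N⁻¹ * R)).det :=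
        mul_le_mul_of_nonneg_left h1 (le_of_lt hN.det_pos)
    _ = (N + D).det := by rw [hfactor, Matrix.det_mul, hcomm]

/-- For `M` positive definite with `M - 1` positive semidefinite, `1 - M⁻¹` is
positive semidefinite. -/
lemma one_sub_inv_posSemidef {M : Matrix (Fin m) (Fin m) ℝ} (hM : M.PosDef)
    (hM1 : (M - 1).PosSemidef) : ((1 : Matrix (Fin m) (Fin m) ℝ) - M⁻¹).PosSemidef := by
  set T := CFC.sqrt M with hTdef
  have hT : T * T = M := CFC.sqrt_mul_sqrt_self M hM.posSemidef.nonneg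
  have hTpsd : T.PosSemidef := (CFC.sqrt_nonneg M).posSemidef
  have hTherm : T.IsHermitian := hTpsd.isHermitian
  have hTunit : IsUnit T.det := by
    apply isUnit_iff_ne_zero.mpr
    intro h
    have : M.det = 0 := by rw [← hT, Matrix.det_mul, h, mul_zero]
    exact (ne_of_gt hM.det_pos) this
  have hTinv : T * T⁻¹ = 1 := Matrix.mul_nonsing_inv _ hTunit
  have hTinv' : T⁻¹ * T = 1 := Matrix.nonsing_inv_mul _ hTunit
  have hMinv : M⁻¹ = T⁻¹ * T⁻¹ := by rw [← hT, Matrix.mul_inv_rev]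
  have e1 : T⁻¹ * M * T⁻¹ = 1 := by
    rw [← hT, ← Matrix.mul_assoc, hTinv', Matrix.one_mul, hTinv]
  have key : (1 : Matrix (Fin m) (Fin m) ℝ) - M⁻¹ = T⁻¹ * (M - 1) * T⁻¹ := by
    rw [Matrix.mul_sub, Matrix.sub_mul, Matrix.mul_one, e1, ← hMinv]
  rw [key]
  have hTinvHerm : (T⁻¹).IsHermitian := hTherm.inv
  have := hM1.conjTranspose_mul_mul_same T⁻¹
  rwa [hTinvHerm.eq] at this

/-- Subadditivity of `det (1 + ·)` on positive semidefinite matrices. -/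
lemma det_one_add_add_le {A B : Matrix (Fin m) (Fin m) ℝ}
    (hA : A.PosSemidef) (hB : B.PosSemidef) :
    ((1 : Matrix (Fin m) (Fin m) ℝ) + (A + B)).det
      ≤ ((1 : Matrix (Fin m) (Fin m) ℝ) + A).det * ((1 : Matrix (Fin m) (Fin m) ℝ) + B).det := by
  set M := (1 : Matrix (Fin m) (Fin m) ℝ) + A with hMdef
  have hM : M.PosDef := Matrix.PosDef.one.add_posSemidef hA
  have hMunit : IsUnit M.det := isUnit_iff_ne_zero.mpr (ne_of_gt hM.det_pos)
  have hM1 : (M - 1).PosSemidef := by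
    have : M - 1 = A := by rw [hMdef, add_sub_cancel_left]
    rwa [this]
  set R := CFC.sqrt B with hRdef
  have hR : R * R = B := CFC.sqrt_mul_sqrt_self B hB.nonneg
  have hRherm : R.IsHermitian := (CFC.sqrt_nonneg B).posSemidef.isHermitian
  set C := R * (M⁻¹ * R) with hCdef
  have hCpsd : C.PosSemidef := by
    have := hM.inv.posSemidef.conjTranspose_mul_mul_same R
    rwa [hRherm.eq, Matrix.mul_assoc] at this
  -- det (1 + A + B) = det M * det (1 + C)
  have hfactor : (1 : Matrix (Fin m) (Fin m) ℝ) + (A + B)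
      = M * ((1 : Matrix (Fin m) (Fin m) ℝ) + M⁻¹ * B) := by
    rw [Matrix.mul_add, Matrix.mul_one, ← Matrix.mul_assoc, Matrix.mul_nonsing_inv _ hMunit,
      Matrix.one_mul, hMdef, add_assoc]
  have hdet1 : ((1 : Matrix (Fin m) (Fin m) ℝ) + (A + B)).det
      = M.det * ((1 : Matrix (Fin m) (Fin m) ℝ) + C).det := by
    have h := Matrix.det_one_add_mul_comm (M⁻¹ * R) R
    rw [Matrix.mul_assoc, hR] at h
    rw [hfactor, Matrix.det_mul, h, hCdef]
  -- det (1 + C) ≤ det (1 + B)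
  have hBC : (B - C).PosSemidef := by
    have hsub : ((1 : Matrix (Fin m) (Fin m) ℝ) - M⁻¹).PosSemidef :=
      one_sub_inv_posSemidef hM hM1
    have hthis := hsub.conjTranspose_mul_mul_same R
    rw [hRherm.eq] at hthis
    have heq : R * ((1 : Matrix (Fin m) (Fin m) ℝ) - M⁻¹) * R = B - C := by
      rw [hCdef, Matrix.mul_sub, Matrix.mul_one, Matrix.sub_mul, hR, Matrix.mul_assoc]
    rwa [heq] at hthis
  have h1C : ((1 : Matrix (Fin m) (Fin m) ℝ) + C).PosDef :=
    Matrix.PosDef.one.add_posSemidef hCpsd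
  have hmono : ((1 : Matrix (Fin m) (Fin m) ℝ) + C).det
      ≤ ((1 : Matrix (Fin m) (Fin m) ℝ) + B).det := by
    have := det_le_det_add h1C hBC
    have heq : (1 : Matrix (Fin m) (Fin m) ℝ) + C + (B - C)
        = (1 : Matrix (Fin m) (Fin m) ℝ) + B := by abel
    rwa [heq] at this
  calc ((1 : Matrix (Fin m) (Fin m) ℝ) + (A + B)).det
      = M.det * ((1 : Matrix (Fin m) (Fin m) ℝ) + C).det := hdet1
    _ ≤ M.det * ((1 : Matrix (Fin m) (Fin m) ℝ) + B).det :=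
        mul_le_mul_of_nonneg_left hmono (le_of_lt hM.det_pos)
    _ = ((1 : Matrix (Fin m) (Fin m) ℝ) + A).det * ((1 : Matrix (Fin m) (Fin m) ℝ) + B).det := rfl

end Aux

/-- Subadditivity of the Gaussian information function: for positive semidefinite
`S₁, S₂, P`, `det(I + (S₁ + S₂)P) ≤ det(I + S₁P) · det(I + S₂P)`, i.e.
`I_s(S₁ + S₂) ≤ I_s(S₁) + I_s(S₂)` for `I_s(M) = log det(I + M P)`: nonnegativity of the
multivariate mutual information between the source and two sensor sets with uncorrelated
Gaussian noises. -/
theorem information_function_subadditive {m : ℕ}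
    (S₁ S₂ P : Matrix (Fin m) (Fin m) ℝ)
    (h₁ : S₁.PosSemidef) (h₂ : S₂.PosSemidef) (hP : P.PosSemidef) :
    ((1 : Matrix (Fin m) (Fin m) ℝ) + (S₁ + S₂) * P).det
      ≤ ((1 : Matrix (Fin m) (Fin m) ℝ) + S₁ * P).det *
        ((1 : Matrix (Fin m) (Fin m) ℝ) + S₂ * P).det := by
  set Q := CFC.sqrt P with hQdef
  have hQ : Q * Q = P := CFC.sqrt_mul_sqrt_self P hP.nonneg
  have hQherm : Q.IsHermitian := (CFC.sqrt_nonneg P).posSemidef.isHermitian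
  have conj : ∀ S : Matrix (Fin m) (Fin m) ℝ,
      ((1 : Matrix (Fin m) (Fin m) ℝ) + S * P).det
        = ((1 : Matrix (Fin m) (Fin m) ℝ) + Q * (S * Q)).det := by
    intro S
    have h := Matrix.det_one_add_mul_comm (S * Q) Q
    rw [Matrix.mul_assoc, hQ] at h
    exact h
  have hA : (Q * (S₁ * Q)).PosSemidef := by
    have := h₁.conjTranspose_mul_mul_same Q
    rwa [hQherm.eq, Matrix.mul_assoc] at this
  have hB : (Q * (S₂ * Q)).PosSemidef := by
    have := h₂.conjTranspose_mul_mul_same Q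
    rwa [hQherm.eq, Matrix.mul_assoc] at this
  rw [conj S₁, conj S₂, conj (S₁ + S₂)]
  have hsplit : (S₁ + S₂) * Q = S₁ * Q + S₂ * Q := Matrix.add_mul _ _ _
  rw [hsplit, Matrix.mul_add]
  exact det_one_add_add_le hA hB
end
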